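/- Let (y₁,y₂) : [0,τ) → (0,∞)² be a differentiable solution of the ODE system with y₁(0), y₂(0) > 0, where 0 < τ ≤ ∞. Let z₁, z₂ : [0,τ) → [0,∞) be measurable functions such that for i = 1,2, j = 3−i, the function s ↦ h_i(s)·z_i(s)^{p_ii}·z_j(s)^{p_ij} is integrable on [0,t] for every t < τ, z_i(0) = y_i(0), and z_i(t) ≥ z_i(0) + ∫₀ᵗ h_i(s)·z_i(s)^{p_ii}·z_j(s)^{p_ij} ds for all t ∈ [0,τ). Then z_i(t) ≥ y_i(t) for all t ∈ [0,τ) and i = 1,2. -/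

import Mathlib

open MeasureTheory Set Filter

lemma rpow_sub_le_lip {a m M u w : ℝ} (ha : 0 ≤ a) (hm : 0 < m)
    (hmw : m ≤ w) (hwu : w ≤ u) (huM : u ≤ M) :
    u ^ a - w ^ a ≤ a * max (m ^ (a - 1)) (M ^ (a - 1)) * (u - w) := by
  set K := a * max (m ^ (a - 1)) (M ^ (a - 1)) with hK
  have hbound : ∀ x ∈ Icc m M, ‖a * x ^ (a - 1)‖ ≤ K := by
    intro x hx
    have hx0 : 0 < x := lt_of_lt_of_le hm hx.1
    rw [norm_mul, Real.norm_eq_abs, Real.norm_eq_abs, abs_of_nonneg ha,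
      abs_of_nonneg (Real.rpow_nonneg hx0.le _)]
    refine mul_le_mul_of_nonneg_left ?_ ha
    rcases le_or_gt 1 a with h1 | h1
    · exact le_max_of_le_right (Real.rpow_le_rpow hx0.le hx.2 (by linarith))
    · exact le_max_of_le_left (Real.rpow_le_rpow_of_nonpos hm hx.1 (by linarith))
  have hderiv : ∀ x ∈ Icc m M,
      HasDerivWithinAt (fun x : ℝ => x ^ a) (a * x ^ (a - 1)) (Icc m M) x := by
    intro x hx
    exact (Real.hasDerivAt_rpow_const
      (Or.inl (ne_of_gt (lt_of_lt_of_le hm hx.1)))).hasDerivWithinAt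
  have hmem1 : w ∈ Icc m M := ⟨hmw, hwu.trans huM⟩
  have hmem2 : u ∈ Icc m M := ⟨hmw.trans hwu, huM⟩
  have := (convex_Icc m M).norm_image_sub_le_of_norm_hasDerivWithin_le
    hderiv hbound hmem1 hmem2
  calc u ^ a - w ^ a ≤ ‖u ^ a - w ^ a‖ := (Real.norm_eq_abs _) ▸ le_abs_self _
    _ ≤ K * ‖u - w‖ := this
    _ = K * (u - w) := by rw [Real.norm_eq_abs, abs_of_nonneg (by linarith)]

set_option maxHeartbeats 1000000 in
theorem statement2 (p : Fin 2 → Fin 2 → ℝ) (hp : ∀ i j, 0 ≤ p i j)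
    (h : Fin 2 → ℝ → ℝ)
    (hhc : ∀ i, ContinuousOn (h i) (Ici 0))
    (hhp : ∀ i, ∀ t : ℝ, 0 ≤ t → 0 < h i t)
    (τ : EReal) (hτ : 0 < τ)
    (y : Fin 2 → ℝ → ℝ)
    (hy0 : ∀ i, 0 < y i 0)
    (hypos : ∀ i, ∀ t : ℝ, 0 ≤ t → (t : EReal) < τ → 0 < y i t)
    (hyd : ∀ i, ∀ t : ℝ, 0 ≤ t → (t : EReal) < τ →
      HasDerivWithinAt (y i)
        (h i t * y i t ^ p i i * y (1 - i) t ^ p i (1 - i))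
        {s : ℝ | 0 ≤ s ∧ (s : EReal) < τ} t)
    (z : Fin 2 → ℝ → ℝ)
    (hzm : ∀ i, Measurable (z i))
    (hznn : ∀ i, ∀ t : ℝ, 0 ≤ z i t)
    (hzint : ∀ i, ∀ t : ℝ, 0 ≤ t → (t : EReal) < τ →
      IntervalIntegrable
        (fun s => h i s * z i s ^ p i i * z (1 - i) s ^ p i (1 - i)) volume 0 t)
    (hz0 : ∀ i, z i 0 = y i 0)
    (hzge : ∀ i, ∀ t : ℝ, 0 ≤ t → (t : EReal) < τ →
      z i 0 + (∫ s in (0:ℝ)..t, h i s * z i s ^ p i i * z (1 - i) s ^ p i (1 - i))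
        ≤ z i t) :
    ∀ i, ∀ t : ℝ, 0 ≤ t → (t : EReal) < τ → y i t ≤ z i t := by
  intro i t ht htτ
  obtain ⟨r, htr, hrτ⟩ := EReal.exists_between_coe_real htτ
  have htr' : t < r := by exact_mod_cast htr
  have hSsub : Icc 0 t ⊆ {s : ℝ | 0 ≤ s ∧ (s : EReal) < τ} := fun s hs =>
    ⟨hs.1, lt_of_le_of_lt (EReal.coe_le_coe_iff.mpr hs.2) htτ⟩
  have h0mem : (0:ℝ) ∈ Icc (0:ℝ) t := ⟨le_rfl, ht⟩
  -- continuity of y on Icc 0 t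
  have hyc : ∀ j, ContinuousOn (y j) (Icc 0 t) := by
    intro j s hs
    exact ((hyd j s hs.1 (hSsub hs).2).continuousWithinAt).mono hSsub
  -- continuity of the vector fields along y
  have hFcont : ∀ j, ContinuousOn
      (fun s => h j s * y j s ^ p j j * y (1 - j) s ^ p j (1 - j)) (Icc 0 t) := by
    intro j
    refine ContinuousOn.mul (ContinuousOn.mul ((hhc j).mono (fun s hs => hs.1)) ?_) ?_
    · exact (hyc j).rpow_const (fun s hs => Or.inr (hp j j))
    · exact (hyc (1 - j)).rpow_const (fun s hs => Or.inr (hp j (1 - j)))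
  -- FTC
  have hFint : ∀ j, ∀ c ∈ Icc (0:ℝ) t, IntervalIntegrable
      (fun s => h j s * y j s ^ p j j * y (1 - j) s ^ p j (1 - j)) volume 0 c := by
    intro j c hc
    apply ContinuousOn.intervalIntegrable
    rw [uIcc_of_le hc.1]
    exact (hFcont j).mono (Icc_subset_Icc le_rfl hc.2)
  have hyeq : ∀ j, ∀ c ∈ Icc (0:ℝ) t,
      y j c = y j 0 + ∫ s in (0:ℝ)..c, h j s * y j s ^ p j j * y (1 - j) s ^ p j (1 - j) := by
    intro j c hc
    have hder : ∀ x ∈ Ioo (0:ℝ) c, HasDerivAt (y j)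
        (h j x * y j x ^ p j j * y (1 - j) x ^ p j (1 - j)) x := by
      intro x hx
      have hx0 : 0 ≤ x := hx.1.le
      have hxmem : x ∈ Icc (0:ℝ) t := ⟨hx0, hx.2.le.trans hc.2⟩
      have hS : {s : ℝ | 0 ≤ s ∧ (s : EReal) < τ} ∈ nhds x := by
        refine mem_of_superset (Ioo_mem_nhds hx.1 (lt_of_le_of_lt hxmem.2 htr')) ?_
        intro s hs
        exact ⟨hs.1.le, lt_trans (EReal.coe_lt_coe_iff.mpr hs.2) hrτ⟩
      exact (hyd j x hx0 (hSsub hxmem).2).hasDerivAt hS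
    have := intervalIntegral.integral_eq_sub_of_hasDeriv_right_of_le hc.1
      ((hyc j).mono (Icc_subset_Icc le_rfl hc.2))
      (fun x hx => (hder x hx).hasDerivWithinAt) (hFint j c hc)
    linarith [this]
  -- compactness bounds
  have hne : (Icc (0:ℝ) t).Nonempty := nonempty_Icc.mpr ht
  have hbd : ∀ j : Fin 2, ∃ Mj mj Hj : ℝ, 0 < mj ∧
      ∀ s ∈ Icc (0:ℝ) t, mj ≤ y j s ∧ y j s ≤ Mj ∧ h j s ≤ Hj := by
    intro j
    obtain ⟨sM, hsM, hM⟩ := isCompact_Icc.exists_isMaxOn hne (hyc j)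
    obtain ⟨sm, hsm, hmm⟩ := isCompact_Icc.exists_isMinOn hne (hyc j)
    obtain ⟨sH, hsH, hH⟩ := isCompact_Icc.exists_isMaxOn hne
      ((hhc j).mono (fun s (hs : s ∈ Icc (0:ℝ) t) => hs.1))
    exact ⟨y j sM, y j sm, h j sH, hypos j sm hsm.1 (hSsub hsm).2,
      fun s hs => ⟨hmm hs, hM hs, hH hs⟩⟩
  obtain ⟨M0, m0, H0, hm0, hb0⟩ := hbd 0
  obtain ⟨M1, m1, H1, hm1, hb1⟩ := hbd 1
  set m : ℝ := min m0 m1 with hm_def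
  set M : ℝ := max M0 M1 with hM_def
  set H : ℝ := max H0 H1 with hH_def
  have hym : ∀ j, ∀ s ∈ Icc (0:ℝ) t, m ≤ y j s := by
    intro j s hs; fin_cases j
    · exact le_trans (min_le_left _ _) (hb0 s hs).1
    · exact le_trans (min_le_right _ _) (hb1 s hs).1
  have hyM : ∀ j, ∀ s ∈ Icc (0:ℝ) t, y j s ≤ M := by
    intro j s hs; fin_cases j
    · exact le_trans (hb0 s hs).2.1 (le_max_left _ _)
    · exact le_trans (hb1 s hs).2.1 (le_max_right _ _)
  have hhH : ∀ j, ∀ s ∈ Icc (0:ℝ) t, h j s ≤ H := by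
    intro j s hs; fin_cases j
    · exact le_trans (hb0 s hs).2.2 (le_max_left _ _)
    · exact le_trans (hb1 s hs).2.2 (le_max_right _ _)
  have hm : 0 < m := lt_min hm0 hm1
  have hmM : m ≤ M := le_trans (hym 0 0 h0mem) (hyM 0 0 h0mem)
  have hM0 : 0 ≤ M := le_trans hm.le hmM
  have hH0 : 0 ≤ H := le_trans (hhp 0 0 le_rfl).le (hhH 0 0 h0mem)
  -- z lower bound
  have hzlb : ∀ j, ∀ s : ℝ, 0 ≤ s → (s : EReal) < τ → m ≤ z j s := by
    intro j s h0 hsτ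
    have hnn : 0 ≤ ∫ u in (0:ℝ)..s,
        h j u * z j u ^ p j j * z (1 - j) u ^ p j (1 - j) := by
      apply intervalIntegral.integral_nonneg h0
      intro u hu
      exact mul_nonneg (mul_nonneg (hhp j u hu.1).le
        (Real.rpow_nonneg (hznn j u) _)) (Real.rpow_nonneg (hznn (1 - j) u) _)
    have h1 := hzge j s h0 hsτ
    have h2 : z j 0 ≤ z j s := by linarith
    calc m ≤ y j 0 := hym j 0 h0mem
      _ = z j 0 := (hz0 j).symm
      _ ≤ z j s := h2
  -- Lipschitz and sup constants
  set Lf : ℝ → ℝ := fun a => a * max (m ^ (a - 1)) (M ^ (a - 1)) with hLf_def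
  set L : ℝ := max (max (Lf (p 0 0)) (Lf (p 0 1))) (max (Lf (p 1 0)) (Lf (p 1 1)))
    with hL_def
  have hLfle : ∀ j k : Fin 2, Lf (p j k) ≤ L := by
    intro j k; fin_cases j <;> fin_cases k
    · exact le_max_of_le_left (le_max_left _ _)
    · exact le_max_of_le_left (le_max_right _ _)
    · exact le_max_of_le_right (le_max_left _ _)
    · exact le_max_of_le_right (le_max_right _ _)
  have hL0 : 0 ≤ L := le_trans (mul_nonneg (hp 0 0)
    (le_max_of_le_left (Real.rpow_nonneg hm.le _))) (hLfle 0 0)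
  have hLip : ∀ j k : Fin 2, ∀ u w : ℝ, m ≤ w → w ≤ u → u ≤ M →
      u ^ p j k - w ^ p j k ≤ L * (u - w) := by
    intro j k u w h1 h2 h3
    refine le_trans (rpow_sub_le_lip (hp j k) hm h1 h2 h3) ?_
    exact mul_le_mul_of_nonneg_right (hLfle j k) (by linarith)
  set Q : ℝ := max (max (M ^ p 0 0) (M ^ p 0 1)) (max (M ^ p 1 0) (M ^ p 1 1))
    with hQ_def
  have hQle : ∀ j k : Fin 2, ∀ x : ℝ, 0 ≤ x → x ≤ M → x ^ p j k ≤ Q := by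
    intro j k x h1 h2
    have hx : x ^ p j k ≤ M ^ p j k := Real.rpow_le_rpow h1 h2 (hp j k)
    refine le_trans hx ?_
    fin_cases j <;> fin_cases k
    · exact le_max_of_le_left (le_max_left _ _)
    · exact le_max_of_le_left (le_max_right _ _)
    · exact le_max_of_le_right (le_max_left _ _)
    · exact le_max_of_le_right (le_max_right _ _)
  have hQ0 : 0 ≤ Q := le_trans (Real.rpow_nonneg hM0 _) (hQle 0 0 M hM0 le_rfl)
  set C : ℝ := H * (2 * L * Q) with hC_def
  have hC0 : 0 ≤ C := mul_nonneg hH0 (by positivity)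
  -- the gap function
  set g : ℝ → ℝ := fun s => max (max (y 0 s - z 0 s) 0) (max (y 1 s - z 1 s) 0)
    with hg_def
  have hg0 : ∀ s, 0 ≤ g s := fun s => le_max_of_le_left (le_max_right _ _)
  have hgle : ∀ j s, y j s - z j s ≤ g s := by
    intro j s; fin_cases j
    · exact le_max_of_le_left (le_max_left _ _)
    · exact le_max_of_le_right (le_max_left _ _)
  have hgM : ∀ s ∈ Icc (0:ℝ) t, g s ≤ M := by
    intro s hs
    have h1 : y 0 s - z 0 s ≤ M := by linarith [hznn 0 s, hyM 0 s hs]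
    have h2 : y 1 s - z 1 s ≤ M := by linarith [hznn 1 s, hyM 1 s hs]
    exact max_le (max_le h1 hM0) (max_le h2 hM0)
  -- key pointwise bound
  have hkey : ∀ j : Fin 2, ∀ s ∈ Icc (0:ℝ) t,
      h j s * y j s ^ p j j * y (1 - j) s ^ p j (1 - j)
        - h j s * z j s ^ p j j * z (1 - j) s ^ p j (1 - j) ≤ C * g s := by
    intro j s hs
    have hu : m ≤ y j s := hym j s hs
    have huM : y j s ≤ M := hyM j s hs
    have hv : m ≤ y (1 - j) s := hym (1 - j) s hs
    have hvM : y (1 - j) s ≤ M := hyM (1 - j) s hs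
    have hw : m ≤ z j s := hzlb j s hs.1 (hSsub hs).2
    have hx : m ≤ z (1 - j) s := hzlb (1 - j) s hs.1 (hSsub hs).2
    set u := y j s; set v := y (1 - j) s; set w := z j s; set x := z (1 - j) s
    set a := p j j with ha_def; set b := p j (1 - j) with hb_def
    set w' : ℝ := min w u with hw'_def
    set x' : ℝ := min x v with hx'_def
    have hw'm : m ≤ w' := le_min hw hu
    have hw'u : w' ≤ u := min_le_right _ _
    have hx'm : m ≤ x' := le_min hx hv
    have hx'v : x' ≤ v := min_le_right _ _
    have h1 : u ^ a - w' ^ a ≤ L * (u - w') := hLip j j u w' hw'm hw'u huM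
    have h2 : v ^ b - x' ^ b ≤ L * (v - x') := hLip j (1 - j) v x' hx'm hx'v hvM
    have huw : u - w' ≤ g s := by
      rw [hw'_def]
      rcases le_total w u with hc | hc
      · rw [min_eq_left hc]; exact hgle j s
      · rw [min_eq_right hc]; simpa using hg0 s
    have hvx : v - x' ≤ g s := by
      rw [hx'_def]
      rcases le_total x v with hc | hc
      · rw [min_eq_left hc]; exact hgle (1 - j) s
      · rw [min_eq_right hc]; simpa using hg0 s
    have hQv : v ^ b ≤ Q := hQle j (1 - j) v (le_trans hm.le hv) hvM
    have hQw' : w' ^ a ≤ Q := hQle j j w' (le_trans hm.le hw'm) (hw'u.trans huM)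
    have hw'a_nn : 0 ≤ w' ^ a := Real.rpow_nonneg (le_trans hm.le hw'm) _
    have hvb_nn : 0 ≤ v ^ b := Real.rpow_nonneg (le_trans hm.le hv) _
    have hx'b_le : x' ^ b ≤ v ^ b :=
      Real.rpow_le_rpow (le_trans hm.le hx'm) hx'v (hp j (1 - j))
    have hmono : w' ^ a * x' ^ b ≤ w ^ a * x ^ b := by
      have hwa : w' ^ a ≤ w ^ a :=
        Real.rpow_le_rpow (le_trans hm.le hw'm) (min_le_left _ _) (hp j j)
      have hxb : x' ^ b ≤ x ^ b :=
        Real.rpow_le_rpow (le_trans hm.le hx'm) (min_le_left _ _) (hp j (1 - j))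
      exact mul_le_mul hwa hxb (Real.rpow_nonneg (le_trans hm.le hx'm) _)
        (Real.rpow_nonneg (le_trans hm.le hw) _)
    have key2 : u ^ a * v ^ b - w ^ a * x ^ b ≤ 2 * L * Q * g s := by
      have e1 : u ^ a * v ^ b - w' ^ a * x' ^ b
          = (u ^ a - w' ^ a) * v ^ b + w' ^ a * (v ^ b - x' ^ b) := by ring
      have t1 : (u ^ a - w' ^ a) * v ^ b ≤ L * g s * Q := by
        have s1 : (u ^ a - w' ^ a) * v ^ b ≤ (L * (u - w')) * v ^ b :=
          mul_le_mul_of_nonneg_right h1 hvb_nn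
        have s2 : (L * (u - w')) * v ^ b ≤ (L * g s) * Q := by
          have hle1 : L * (u - w') ≤ L * g s := mul_le_mul_of_nonneg_left huw hL0
          exact mul_le_mul hle1 hQv hvb_nn (mul_nonneg hL0 (hg0 s))
        linarith
      have t2 : w' ^ a * (v ^ b - x' ^ b) ≤ Q * (L * g s) := by
        have s1 : w' ^ a * (v ^ b - x' ^ b) ≤ Q * (v ^ b - x' ^ b) :=
          mul_le_mul_of_nonneg_right hQw' (by linarith)
        have s2 : Q * (v ^ b - x' ^ b) ≤ Q * (L * g s) := by
          refine mul_le_mul_of_nonneg_left ?_ hQ0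
          refine le_trans h2 (mul_le_mul_of_nonneg_left hvx hL0)
        linarith
      nlinarith [hmono]
    have hh1 : 0 < h j s := hhp j s hs.1
    have hh2 : h j s ≤ H := hhH j s hs
    have hgoal : h j s * u ^ a * v ^ b - h j s * w ^ a * x ^ b
        = h j s * (u ^ a * v ^ b - w ^ a * x ^ b) := by ring
    rw [hgoal]
    rcases le_or_gt (u ^ a * v ^ b - w ^ a * x ^ b) 0 with hd | hd
    · have : h j s * (u ^ a * v ^ b - w ^ a * x ^ b) ≤ 0 :=
        mul_nonpos_of_nonneg_of_nonpos hh1.le hd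
      exact le_trans this (mul_nonneg hC0 (hg0 s))
    · calc h j s * (u ^ a * v ^ b - w ^ a * x ^ b)
          ≤ H * (u ^ a * v ^ b - w ^ a * x ^ b) :=
            mul_le_mul_of_nonneg_right hh2 hd.le
        _ ≤ H * (2 * L * Q * g s) := mul_le_mul_of_nonneg_left key2 hH0
        _ = C * g s := by rw [hC_def]; ring
  -- integrability of g
  have hgint : ∀ c ∈ Icc (0:ℝ) t, IntervalIntegrable g volume 0 c := by
    intro c hc
    rw [intervalIntegrable_iff_integrableOn_Ioc_of_le hc.1]
    have hsub : Ioc (0:ℝ) c ⊆ Icc 0 t := fun s hs => ⟨hs.1.le, hs.2.trans hc.2⟩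
    have hmeasY : ∀ j : Fin 2, AEMeasurable (y j) (volume.restrict (Ioc 0 c)) :=
      fun j => ((hyc j).mono hsub).aemeasurable measurableSet_Ioc
    have hmeas : AEStronglyMeasurable g (volume.restrict (Ioc 0 c)) := by
      apply AEMeasurable.aestronglyMeasurable
      exact AEMeasurable.max
        (AEMeasurable.max ((hmeasY 0).sub (hzm 0).aemeasurable) aemeasurable_const)
        (AEMeasurable.max ((hmeasY 1).sub (hzm 1).aemeasurable) aemeasurable_const)
    have hMint : IntegrableOn (fun _ : ℝ => M) (Ioc 0 c) volume :=
      integrableOn_const measure_Ioc_lt_top.ne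
    refine Integrable.mono' hMint hmeas ?_
    filter_upwards [ae_restrict_mem measurableSet_Ioc] with s hs
    rw [Real.norm_eq_abs, abs_of_nonneg (hg0 s)]
    exact hgM s (hsub hs)
  -- integral step inequality
  have hstep : ∀ c ∈ Icc (0:ℝ) t, ∀ j, y j c - z j c ≤ C * ∫ s in (0:ℝ)..c, g s := by
    intro c hc j
    have hFi := hFint j c hc
    have hGi := hzint j c hc.1 (hSsub hc).2
    have h1 := hyeq j c hc
    have h2 : y j 0 + (∫ s in (0:ℝ)..c,
        h j s * z j s ^ p j j * z (1 - j) s ^ p j (1 - j)) ≤ z j c := by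
      rw [← hz0 j]; exact hzge j c hc.1 (hSsub hc).2
    have h3 : (∫ s in (0:ℝ)..c, (h j s * y j s ^ p j j * y (1 - j) s ^ p j (1 - j)
          - h j s * z j s ^ p j j * z (1 - j) s ^ p j (1 - j)))
        = (∫ s in (0:ℝ)..c, h j s * y j s ^ p j j * y (1 - j) s ^ p j (1 - j))
          - ∫ s in (0:ℝ)..c, h j s * z j s ^ p j j * z (1 - j) s ^ p j (1 - j) :=
      intervalIntegral.integral_sub hFi hGi
    have h4 : (∫ s in (0:ℝ)..c, (h j s * y j s ^ p j j * y (1 - j) s ^ p j (1 - j)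
          - h j s * z j s ^ p j j * z (1 - j) s ^ p j (1 - j)))
        ≤ ∫ s in (0:ℝ)..c, C * g s := by
      refine intervalIntegral.integral_mono_on hc.1 (hFi.sub hGi)
        ((hgint c hc).const_mul C) ?_
      intro s hs
      exact hkey j s ⟨hs.1, hs.2.trans hc.2⟩
    have h5 : (∫ s in (0:ℝ)..c, C * g s) = C * ∫ s in (0:ℝ)..c, g s :=
      intervalIntegral.integral_const_mul _ _
    linarith
  have hintnn : ∀ c ∈ Icc (0:ℝ) t, 0 ≤ ∫ s in (0:ℝ)..c, g s := by
    intro c hc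
    exact intervalIntegral.integral_nonneg hc.1 (fun u _ => hg0 u)
  have hgstep : ∀ c ∈ Icc (0:ℝ) t, g c ≤ C * ∫ s in (0:ℝ)..c, g s := by
    intro c hc
    have hnn : 0 ≤ C * ∫ s in (0:ℝ)..c, g s := mul_nonneg hC0 (hintnn c hc)
    exact max_le (max_le (hstep c hc 0) hnn) (max_le (hstep c hc 1) hnn)
  -- Gronwall iteration
  have hgron : ∀ n : ℕ, ∀ c ∈ Icc (0:ℝ) t, g c ≤ M * ((C * c) ^ n / n.factorial) := by
    intro n
    induction n with
    | zero => intro c hc; simpa using hgM c hc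
    | succ n ih =>
      intro c hc
      have h1 := hgstep c hc
      have h2 : (∫ s in (0:ℝ)..c, g s)
          ≤ ∫ s in (0:ℝ)..c, M * ((C * s) ^ n / n.factorial) := by
        refine intervalIntegral.integral_mono_on hc.1 (hgint c hc) ?_ ?_
        · have hcont : Continuous fun s : ℝ => M * ((C * s) ^ n / (n.factorial : ℝ)) :=
            continuous_const.mul (((continuous_const.mul continuous_id).pow n).div_const _)
          exact hcont.intervalIntegrable 0 c
        · intro s hs
          exact ih s ⟨hs.1, hs.2.trans hc.2⟩
      have h3 : (∫ s in (0:ℝ)..c, M * ((C * s) ^ n / n.factorial))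
          = (M * C ^ n / n.factorial) * (c ^ (n + 1) / (n + 1)) := by
        have he : (fun s : ℝ => M * ((C * s) ^ n / n.factorial))
            = fun s : ℝ => (M * C ^ n / n.factorial) * s ^ n := by
          funext s; rw [mul_pow]; ring
        rw [he, intervalIntegral.integral_const_mul, integral_pow]
        norm_num
      have hfac : ((n + 1).factorial : ℝ) = (n + 1) * n.factorial := by
        push_cast [Nat.factorial_succ]; ring
      have hfn : (0:ℝ) < n.factorial := by positivity
      have hn1 : (0:ℝ) < (n:ℝ) + 1 := by positivity
      calc g c ≤ C * ∫ s in (0:ℝ)..c, g s := h1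
        _ ≤ C * ((M * C ^ n / n.factorial) * (c ^ (n + 1) / (n + 1))) := by
            rw [← h3]; exact mul_le_mul_of_nonneg_left h2 hC0
        _ = M * ((C * c) ^ (n + 1) / (n + 1).factorial) := by
            rw [hfac, mul_pow]
            field_simp
            ring
  -- pass to the limit
  have hlim : Tendsto (fun n : ℕ => M * ((C * t) ^ n / n.factorial)) atTop (nhds 0) := by
    have h1 := FloorSemiring.tendsto_pow_div_factorial_atTop (K := ℝ) (C * t)
    simpa using h1.const_mul M
  have hgt : g t ≤ 0 :=
    ge_of_tendsto' hlim (fun n => hgron n t ⟨ht, le_rfl⟩)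
  have := hgle i t
  linarith
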